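/- Define rational functions a(t,b) = (-b(t^3+2t^2-1) + t^5 - 5t^3 - 5t^2 - 3) / (2t^2(t-1)(t^2+t-1)) and c(t,b) = -(b·t^2(t^3-2t+1) + 3t^5 + 5t^3 - 5t^2 + 1) / (2(t+1)(t^2+t-1)). Let x(t) = t^2(t-1)/(t+1), y(t) = (t^2+1)(t^4-2t^3-6t^2+2t+1)/(2(t+1)^2), and s(t) = a·x(t)^2 + b·x(t) + c. Then for every b and every t ∉ {0, 1, -1, roots of t^2+t-1}, setting a = a(t,b) and c = c(t,b), the function u ↦ s(u) - y(u) vanishes to order at least 2 at u = t (i.e., s(t) = y(t) and s'(t) = y'(t)). -/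

import Mathlib

/-- The parametrization `x(t)` of the trigonal curve. -/
noncomputable def paramX (t : ℝ) : ℝ := t ^ 2 * (t - 1) / (t + 1)

/-- The parametrization `y(t)` of the trigonal curve. -/
noncomputable def paramY (t : ℝ) : ℝ :=
  (t ^ 2 + 1) * (t ^ 4 - 2 * t ^ 3 - 6 * t ^ 2 + 2 * t + 1) / (2 * (t + 1) ^ 2)

/-- Coefficient `a` of a section simply tangent to the curve at parameter `t`. -/
noncomputable def tanA (t b : ℝ) : ℝ :=
  (-b * (t ^ 3 + 2 * t ^ 2 - 1) + t ^ 5 - 5 * t ^ 3 - 5 * t ^ 2 - 3) /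
    (2 * t ^ 2 * (t - 1) * (t ^ 2 + t - 1))

/-- Coefficient `c` of a section simply tangent to the curve at parameter `t`. -/
noncomputable def tanC (t b : ℝ) : ℝ :=
  -(b * t ^ 2 * (t ^ 3 - 2 * t + 1) + 3 * t ^ 5 + 5 * t ^ 3 - 5 * t ^ 2 + 1) /
    (2 * (t + 1) * (t ^ 2 + t - 1))

lemma paramX_hasDerivAt (t : ℝ) (h : t + 1 ≠ 0) :
    HasDerivAt paramX
      (((3 * t ^ 2 - 2 * t) * (t + 1) - t ^ 2 * (t - 1)) / (t + 1) ^ 2) t := by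
  have hN : HasDerivAt (fun u : ℝ => u ^ 2 * (u - 1)) (3 * t ^ 2 - 2 * t) t := by
    have := (hasDerivAt_pow 2 t).fun_mul ((hasDerivAt_id t).sub_const 1)
    refine this.congr_deriv ?_
    simp [id]
    ring
  have hD : HasDerivAt (fun u : ℝ => u + 1) 1 t := (hasDerivAt_id t).add_const 1
  have := hN.fun_div hD h
  refine this.congr_deriv ?_
  ring

lemma paramY_hasDerivAt (t : ℝ) (h : t + 1 ≠ 0) :
    HasDerivAt paramY
      (((2 * t * (t ^ 4 - 2 * t ^ 3 - 6 * t ^ 2 + 2 * t + 1) +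
          (t ^ 2 + 1) * (4 * t ^ 3 - 6 * t ^ 2 - 12 * t + 2)) * (2 * (t + 1) ^ 2) -
        (t ^ 2 + 1) * (t ^ 4 - 2 * t ^ 3 - 6 * t ^ 2 + 2 * t + 1) * (4 * (t + 1))) /
        (2 * (t + 1) ^ 2) ^ 2) t := by
  have hN : HasDerivAt
      (fun u : ℝ => (u ^ 2 + 1) * (u ^ 4 - 2 * u ^ 3 - 6 * u ^ 2 + 2 * u + 1))
      (2 * t * (t ^ 4 - 2 * t ^ 3 - 6 * t ^ 2 + 2 * t + 1) +
        (t ^ 2 + 1) * (4 * t ^ 3 - 6 * t ^ 2 - 12 * t + 2)) t := by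
    have h1 : HasDerivAt (fun u : ℝ => u ^ 2 + 1) (2 * t) t := by
      simpa using (hasDerivAt_pow 2 t).add_const 1
    have h2 : HasDerivAt (fun u : ℝ => u ^ 4 - 2 * u ^ 3 - 6 * u ^ 2 + 2 * u + 1)
        (4 * t ^ 3 - 6 * t ^ 2 - 12 * t + 2) t := by
      have := ((((hasDerivAt_pow 4 t).fun_sub ((hasDerivAt_pow 3 t).const_mul 2)).fun_sub
        ((hasDerivAt_pow 2 t).const_mul 6)).fun_add ((hasDerivAt_id t).const_mul 2)).add_const 1
      refine this.congr_deriv ?_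
      ring
    exact h1.fun_mul h2
  have hD : HasDerivAt (fun u : ℝ => 2 * (u + 1) ^ 2) (4 * (t + 1)) t := by
    have : HasDerivAt (fun u : ℝ => (u + 1) ^ 2) (2 * (t + 1)) t := by
      have := ((hasDerivAt_id t).add_const 1).fun_pow 2
      simpa using this
    have := this.const_mul 2
    refine this.congr_deriv ?_
    ring
  have hD0 : 2 * (t + 1) ^ 2 ≠ 0 := by positivity
  exact hN.fun_div hD hD0

theorem stmt9 (b t : ℝ) (h0 : t ≠ 0) (h1 : t ≠ 1) (h2 : t ≠ -1)
    (h3 : t ^ 2 + t - 1 ≠ 0) :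
    let a := tanA t b
    let c := tanC t b
    let g : ℝ → ℝ := fun u => (a * (paramX u) ^ 2 + b * paramX u + c) - paramY u
    g t = 0 ∧ deriv g t = 0 := by
  intro a c g
  have hp1 : t + 1 ≠ 0 := fun h => h2 (by linarith)
  have hm1 : t - 1 ≠ 0 := sub_ne_zero.mpr h1
  have hx := paramX_hasDerivAt t hp1
  have hy := paramY_hasDerivAt t hp1
  have hg : HasDerivAt g
      (a * (2 * paramX t *
          (((3 * t ^ 2 - 2 * t) * (t + 1) - t ^ 2 * (t - 1)) / (t + 1) ^ 2)) +
        b * (((3 * t ^ 2 - 2 * t) * (t + 1) - t ^ 2 * (t - 1)) / (t + 1) ^ 2) -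
        ((2 * t * (t ^ 4 - 2 * t ^ 3 - 6 * t ^ 2 + 2 * t + 1) +
          (t ^ 2 + 1) * (4 * t ^ 3 - 6 * t ^ 2 - 12 * t + 2)) * (2 * (t + 1) ^ 2) -
          (t ^ 2 + 1) * (t ^ 4 - 2 * t ^ 3 - 6 * t ^ 2 + 2 * t + 1) * (4 * (t + 1))) /
          (2 * (t + 1) ^ 2) ^ 2) t := by
    have hsq : HasDerivAt (fun u => (paramX u) ^ 2)
        (2 * paramX t * (((3 * t ^ 2 - 2 * t) * (t + 1) - t ^ 2 * (t - 1)) / (t + 1) ^ 2)) t := by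
      have := hx.fun_pow 2
      refine this.congr_deriv ?_
      ring
    exact ((((hsq.const_mul a).fun_add (hx.const_mul b)).add_const c).fun_sub hy)
  have h3' : t * (t + 1) - 1 ≠ 0 := fun h => h3 (by linarith)
  constructor
  · show (a * (paramX t) ^ 2 + b * paramX t + c) - paramY t = 0
    simp only [a, c, tanA, tanC, paramX, paramY]
    field_simp
    ring
  · rw [hg.deriv]
    simp only [a, tanA, paramX]
    field_simp
    ring
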